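/- arXiv:2402.12988 — 4 statements merged into one kernel-verified Lean document; each statement's English description precedes it below -/
import Mathlib

section
/- For any dual quaternion q = q_s + q_d·ε there exists a unit dual quaternion u and a dual complex number a such that a = u* q u. Moreover Re(q) = Re(a) and |Im(q)| = |Im(a)|, where real parts and magnitudes of imaginary parts are taken componentwise (standard and dual parts). -/
open TrivSqZeroExt

noncomputable section
open Classical

local notation "ℍ" => Quaternion ℝ

/-- Conjugate of a dual quaternion. -/
def dstar (a : DualNumber ℍ) : DualNumber ℍ := inl (star a.fst) + inr (star a.snd)

/-- Imaginary part of a quaternion. -/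
def imQ (x : ℍ) : ℍ := x - (x.re : ℍ)

/-- Imaginary part of a dual quaternion, taken componentwise. -/
def dualIm (p : DualNumber ℍ) : DualNumber ℍ := inl (imQ p.fst) + inr (imQ p.snd)

/-- The magnitude of a dual quaternion, as a dual (real) number. -/
def dmagH (p : DualNumber ℍ) : DualNumber ℝ :=
  if p.fst ≠ 0 then
    inl ‖p.fst‖ + inr ((star p.fst * p.snd + star p.snd * p.fst).re / (2 * ‖p.fst‖))
  else inr ‖p.snd‖

/-! ### Auxiliary quaternion lemmas -/

def ii : ℍ := ⟨0,1,0,0⟩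
def jj : ℍ := ⟨0,0,1,0⟩

@[simp] lemma ii_re : ii.re = 0 := rfl
@[simp] lemma ii_imI : ii.imI = 1 := rfl
@[simp] lemma ii_imJ : ii.imJ = 0 := rfl
@[simp] lemma ii_imK : ii.imK = 0 := rfl
@[simp] lemma jj_re : jj.re = 0 := rfl
@[simp] lemma jj_imI : jj.imI = 0 := rfl
@[simp] lemma jj_imJ : jj.imJ = 1 := rfl
@[simp] lemma jj_imK : jj.imK = 0 := rfl

lemma conj_re (u x : ℍ) : (star u * x * u).re = Quaternion.normSq u * x.re := by
  simp [Quaternion.re_mul, Quaternion.normSq_def']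
  ring

lemma key_identity (v : ℍ) (s : ℝ) (hre : v.re = 0)
    (hs : s^2 = v.imI^2 + v.imJ^2 + v.imK^2) :
    star ((s : ℍ) * ii + v) * v * ((s : ℍ) * ii + v)
      = ((s * Quaternion.normSq ((s : ℍ) * ii + v)) : ℝ) • ii := by
  apply Quaternion.ext
  · simp [Quaternion.re_mul, Quaternion.imI_mul, Quaternion.imJ_mul, Quaternion.imK_mul,
      Quaternion.normSq_def', hre]
    ring
  · simp [Quaternion.re_mul, Quaternion.imI_mul, Quaternion.imJ_mul, Quaternion.imK_mul,
      Quaternion.normSq_def', hre]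
    linear_combination (-(s + v.imI)) * hs
  · simp [Quaternion.re_mul, Quaternion.imI_mul, Quaternion.imJ_mul, Quaternion.imK_mul,
      Quaternion.normSq_def', hre]
    linear_combination (-v.imJ) * hs
  · simp [Quaternion.re_mul, Quaternion.imI_mul, Quaternion.imJ_mul, Quaternion.imK_mul,
      Quaternion.normSq_def', hre]
    linear_combination (-v.imK) * hs

lemma imQ_re (x : ℍ) : (imQ x).re = 0 := by simp [imQ]

lemma imQ_eq (x : ℍ) : imQ x = ⟨0, x.imI, x.imJ, x.imK⟩ := by
  apply Quaternion.ext <;> simp [imQ]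

lemma norm_sq_eq (v : ℍ) : ‖v‖^2 = Quaternion.normSq v := by
  rw [sq, ← Quaternion.normSq_eq_norm_mul_self]

lemma norm_of (y : ℍ) (t : ℝ) (ht : 0 ≤ t) (h : Quaternion.normSq y = t^2) : ‖y‖ = t := by
  have h2 := norm_sq_eq y
  nlinarith [norm_nonneg y]

lemma exists_conj (x : ℍ) : ∃ u : ℍ, ‖u‖ = 1 ∧
    star u * x * u = ⟨x.re, ‖imQ x‖, 0, 0⟩ := by
  set v := imQ x with hv
  have hre : v.re = 0 := imQ_re x
  set s := ‖v‖ with hsdef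
  have hs : s^2 = v.imI^2 + v.imJ^2 + v.imK^2 := by
    rw [hsdef, norm_sq_eq, Quaternion.normSq_def', hre]; ring
  have hxv : x = (x.re : ℍ) + v := by simp [hv, imQ]
  by_cases hw : ((s : ℍ) * ii + v) = 0
  · have h1 : v.imI = -s := by
      have := congrArg QuaternionAlgebra.imI hw
      simp [Quaternion.imI_mul, Quaternion.imI_zero] at this
      linarith
    have h2 : v.imJ = 0 := by
      have := congrArg QuaternionAlgebra.imJ hw
      simpa [Quaternion.imJ_mul, Quaternion.imJ_zero] using this
    have h3 : v.imK = 0 := by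
      have := congrArg QuaternionAlgebra.imK hw
      simpa [Quaternion.imK_mul, Quaternion.imK_zero] using this
    refine ⟨jj, ?_, ?_⟩
    · have h4 : ‖jj‖^2 = 1 := by
        rw [norm_sq_eq, Quaternion.normSq_def']; simp
      nlinarith [norm_nonneg jj]
    · rw [hxv]
      apply Quaternion.ext <;>
        simp [Quaternion.re_mul, Quaternion.imI_mul, Quaternion.imJ_mul, Quaternion.imK_mul,
          hre, h1, h2, h3]
  · set w : ℍ := (s : ℍ) * ii + v with hwdef
    have hnw : ‖w‖ ≠ 0 := norm_ne_zero_iff.mpr hw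
    have hnsq : Quaternion.normSq w ≠ 0 := by
      rw [← norm_sq_eq]; positivity
    refine ⟨‖w‖⁻¹ • w, ?_, ?_⟩
    · rw [norm_smul]; simp [hnw]
    · have hkey := key_identity v s hre hs
      rw [← hwdef] at hkey
      have hsww : star w * w = ((Quaternion.normSq w : ℝ) : ℍ) := Quaternion.star_mul_self w
      have h2 : star w * (x.re : ℍ) * w = ((x.re * Quaternion.normSq w : ℝ) : ℍ) := by
        rw [mul_assoc, Quaternion.coe_commutes, ← mul_assoc, hsww, ← Quaternion.coe_mul,
          mul_comm]
      have h3 : star w * x * w = star w * (x.re : ℍ) * w + star w * v * w := by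
        conv_lhs => rw [hxv]
        noncomm_ring
      rw [h2, hkey] at h3
      have hstar : star (‖w‖⁻¹ • w) = ‖w‖⁻¹ • star w := Quaternion.star_smul _ _
      have hN : ‖w‖⁻¹ * ‖w‖⁻¹ * Quaternion.normSq w = 1 := by
        rw [← norm_sq_eq]; field_simp
      rw [hstar, smul_mul_assoc, smul_mul_assoc, mul_smul_comm, smul_smul, h3]
      apply Quaternion.ext <;>
        simp <;>
        first
          | linear_combination x.re * hN
          | linear_combination s * hN

lemma unit_left (u : ℍ) (hu : ‖u‖ = 1) : star u * u = 1 := by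
  have hN : Quaternion.normSq u = 1 := by rw [← norm_sq_eq, hu]; norm_num
  rw [Quaternion.star_mul_self, hN]; simp

lemma unit_right (u : ℍ) (hu : ‖u‖ = 1) : u * star u = 1 := by
  have hN : Quaternion.normSq u = 1 := by rw [← norm_sq_eq, hu]; norm_num
  rw [Quaternion.self_mul_star, hN]; simp

lemma conj_coe (u : ℍ) (hu : ‖u‖ = 1) (r : ℝ) : star u * (r : ℍ) * u = (r : ℍ) := by
  rw [mul_assoc, Quaternion.coe_commutes, ← mul_assoc, unit_left u hu, one_mul]

lemma conj_re' (u x : ℍ) (hu : ‖u‖ = 1) : (star u * x * u).re = x.re := by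
  have hN : Quaternion.normSq u = 1 := by rw [← norm_sq_eq, hu]; norm_num
  rw [conj_re, hN, one_mul]

lemma conj_inner (u x y : ℍ) (hu : ‖u‖ = 1) :
    (star (star u * x * u) * (star u * y * u)).re = (star x * y).re := by
  have hr := unit_right u hu
  have h1 : star (star u * x * u) * (star u * y * u)
      = star u * (star x * ((u * star u) * y)) * u := by
    rw [star_mul, star_mul, star_star]
    noncomm_ring
  rw [h1, hr, one_mul, conj_re' u _ hu]

lemma conj_imQ (u x : ℍ) (hu : ‖u‖ = 1) :
    star u * imQ x * u = star u * x * u - ((x.re : ℝ) : ℍ) := by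
  rw [imQ, mul_sub, sub_mul, conj_coe u hu]

/-- The correction step: conjugating away the j,k components of the dual part. -/
lemma corr (r sv cr cI cJ cK : ℝ) (hsv : sv ≠ 0) :
    (⟨cr,cI,cJ,cK⟩ : ℍ) + (⟨r,sv,0,0⟩ : ℍ) * (⟨0,0,-cK/(2*sv), cJ/(2*sv)⟩ : ℍ)
      - (⟨0,0,-cK/(2*sv), cJ/(2*sv)⟩ : ℍ) * (⟨r,sv,0,0⟩ : ℍ) = (⟨cr,cI,0,0⟩ : ℍ) := by
  apply Quaternion.ext <;>
    simp [Quaternion.re_mul, Quaternion.imI_mul, Quaternion.imJ_mul, Quaternion.imK_mul] <;>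
    field_simp <;> ring

/-- Every dual quaternion `q` is similar, via a unit dual quaternion `u`, to a dual complex
number `a = u* q u` (both parts of `a` lie in `span{1, i}`); moreover `Re(q) = Re(a)`
componentwise and `|Im(q)| = |Im(a)|` as dual numbers. -/
theorem dual_quaternion_similar_dual_complex (q : DualNumber ℍ) :
    ∃ u a : DualNumber ℍ,
      (‖u.fst‖ = 1 ∧ u.fst * star u.snd + u.snd * star u.fst = 0) ∧
      (a.fst.imJ = 0 ∧ a.fst.imK = 0 ∧ a.snd.imJ = 0 ∧ a.snd.imK = 0) ∧
      a = dstar u * q * u ∧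
      a.fst.re = q.fst.re ∧ a.snd.re = q.snd.re ∧
      dmagH (dualIm q) = dmagH (dualIm a) := by
  by_cases hv : imQ q.fst = 0
  case pos =>
    obtain ⟨u0, hu, hc⟩ := exists_conj q.snd
    have hfst : (dstar (inl u0) * q * inl u0).fst = star u0 * q.fst * u0 := by
      simp [dstar, fst_mul, snd_mul]
    have hsnd : (dstar (inl u0) * q * inl u0).snd = star u0 * q.snd * u0 := by
      simp [dstar, fst_mul, snd_mul, smul_eq_mul, MulOpposite.smul_eq_mul_unop]
    have hqf : q.fst = ((q.fst.re : ℝ) : ℍ) := by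
      have h := hv; rw [imQ, sub_eq_zero] at h; exact h
    have hfix : star u0 * q.fst * u0 = q.fst := by
      conv_lhs => rw [hqf]
      rw [conj_coe u0 hu, ← hqf]
    refine ⟨inl u0, dstar (inl u0) * q * inl u0, ⟨by simpa using hu, by simp⟩, ?_, rfl, ?_⟩
    · refine ⟨?_, ?_, ?_, ?_⟩
      · rw [hfst, hfix, hqf]; simp
      · rw [hfst, hfix, hqf]; simp
      · rw [hsnd, hc]
      · rw [hsnd, hc]
    · refine ⟨by rw [hfst, hfix], by rw [hsnd, hc], ?_⟩
      have hf0 : (dualIm q).fst = 0 := by simp [dualIm, hv]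
      have hf0' : (dualIm (dstar (inl u0) * q * inl u0)).fst = 0 := by
        simp only [dualIm, fst_add, fst_inl, fst_inr, add_zero, hfst, hfix, hv]
      have hsq : (dualIm q).snd = imQ q.snd := by simp [dualIm]
      have hsq' : (dualIm (dstar (inl u0) * q * inl u0)).snd
          = (⟨0, ‖imQ q.snd‖, 0, 0⟩ : ℍ) := by
        simp only [dualIm, snd_add, snd_inl, snd_inr, hsnd, hc, zero_add]
        exact imQ_eq _
      rw [dmagH, dmagH, if_neg (by simpa using hf0), if_neg (by simpa using hf0'), hsq, hsq']
      congr 1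
      refine (norm_of _ _ (norm_nonneg _) ?_).symm
      erw [Quaternion.normSq_def']
      simp
  case neg =>
    obtain ⟨u0, hu, hb⟩ := exists_conj q.fst
    set s : ℝ := ‖imQ q.fst‖ with hsdef
    have hspos : 0 < s := by
      rw [hsdef]; exact norm_pos_iff.mpr hv
    have hsne : s ≠ 0 := ne_of_gt hspos
    set c : ℍ := star u0 * q.snd * u0 with hcdef
    have hcre : c.re = q.snd.re := conj_re' u0 q.snd hu
    set h : ℍ := (⟨0, 0, -c.imK/(2*s), c.imJ/(2*s)⟩ : ℍ) with hhdef
    have hhstar : star h = -h := by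
      exact Quaternion.star_eq_neg.mpr (by simp [hhdef])
    set u : DualNumber ℍ := inl u0 + inr (u0 * h) with hudef
    have hufst : u.fst = u0 := by simp [hudef]
    have husnd : u.snd = u0 * h := by simp [hudef]
    set b : ℍ := (⟨q.fst.re, s, 0, 0⟩ : ℍ) with hbdef
    have hafst : (dstar u * q * u).fst = b := by
      simp only [dstar, hufst, husnd, fst_mul, snd_mul, fst_add, snd_add, fst_inl, snd_inl,
        fst_inr, snd_inr, add_zero, zero_add]
      exact hb
    have hasnd : (dstar u * q * u).snd = c + b * h - h * b := by
      have e : (dstar u * q * u).snd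
          = star u0 * q.snd * u0 + star h * (star u0 * q.fst * u0)
            + (star u0 * q.fst * u0) * h := by
        simp only [dstar, hufst, husnd, fst_mul, snd_mul, fst_add, snd_add, fst_inl, snd_inl,
          fst_inr, snd_inr, add_zero, zero_add, smul_eq_mul, MulOpposite.smul_eq_mul_unop,
          star_mul]
        noncomm_ring
      rw [e, hb, ← hcdef, hhstar]
      noncomm_ring
    have hcorr : c + b * h - h * b = (⟨c.re, c.imI, 0, 0⟩ : ℍ) := by
      have hcx : c = (⟨c.re, c.imI, c.imJ, c.imK⟩ : ℍ) := by
        apply Quaternion.ext <;> simp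
      conv_lhs => rw [hcx]
      exact corr q.fst.re s c.re c.imI c.imJ c.imK hsne
    refine ⟨u, dstar u * q * u, ⟨by rw [hufst]; exact hu, ?_⟩, ?_, rfl, ?_, ?_, ?_⟩
    · rw [hufst, husnd, star_mul, hhstar]
      noncomm_ring
    · refine ⟨?_, ?_, ?_, ?_⟩
      · rw [hafst, hbdef]
      · rw [hafst, hbdef]
      · rw [hasnd, hcorr]
      · rw [hasnd, hcorr]
    · rw [hafst, hbdef]
    · rw [hasnd, hcorr]; exact hcre
    · -- magnitudes
      have hX : star u0 * imQ q.fst * u0 = (⟨0, s, 0, 0⟩ : ℍ) := by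
        rw [conj_imQ u0 q.fst hu, hb, hbdef]
        apply Quaternion.ext
        · erw [Quaternion.re_sub]; simp [Quaternion.re_coe]
        · erw [Quaternion.imI_sub]; simp [Quaternion.imI_coe]
        · erw [Quaternion.imJ_sub]; simp [Quaternion.imJ_coe]
        · erw [Quaternion.imK_sub]; simp [Quaternion.imK_coe]
      have hY : star u0 * imQ q.snd * u0 = imQ c := by
        rw [conj_imQ u0 q.snd hu, ← hcdef, imQ, hcre]
      have hic : imQ c = (⟨0, c.imI, c.imJ, c.imK⟩ : ℍ) := imQ_eq c
      have hA : (star (imQ q.fst) * imQ q.snd).re = s * c.imI := by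
        have h1 := conj_inner u0 (imQ q.fst) (imQ q.snd) hu
        rw [hX, hY, hic] at h1
        rw [← h1]
        erw [Quaternion.re_mul, Quaternion.re_star, Quaternion.imI_star, Quaternion.imJ_star, Quaternion.imK_star]; simp
      have hB : (star (imQ q.snd) * imQ q.fst).re = s * c.imI := by
        have h1 := conj_inner u0 (imQ q.snd) (imQ q.fst) hu
        rw [hX, hY, hic] at h1
        rw [← h1]
        erw [Quaternion.re_mul, Quaternion.re_star, Quaternion.imI_star, Quaternion.imJ_star, Quaternion.imK_star]; simp
        ring
      have hdf : (dualIm q).fst = imQ q.fst := by simp [dualIm]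
      have hds : (dualIm q).snd = imQ q.snd := by simp [dualIm]
      have hdf' : (dualIm (dstar u * q * u)).fst = (⟨0, s, 0, 0⟩ : ℍ) := by
        simp only [dualIm, fst_add, fst_inl, fst_inr, add_zero, hafst]
        rw [imQ_eq, hbdef]
      have hds' : (dualIm (dstar u * q * u)).snd = (⟨0, c.imI, 0, 0⟩ : ℍ) := by
        simp only [dualIm, snd_add, snd_inl, snd_inr, zero_add, hasnd, hcorr]
        exact imQ_eq _
      have hne2 : (⟨0, s, 0, 0⟩ : ℍ) ≠ 0 := by
        intro hh
        have := congrArg QuaternionAlgebra.imI hh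
        simp at this
        exact hsne this
      have hnorm2 := norm_of (⟨0, s, 0, 0⟩ : ℍ) s hspos.le
        (by erw [Quaternion.normSq_def']; simp)
      rw [dmagH, dmagH, hdf, hds, hdf', hds', if_pos hv]; erw [if_pos hne2]
      apply TrivSqZeroExt.ext
      · simp only [fst_add, fst_inl, fst_inr, add_zero]
        rw [hnorm2, ← hsdef]
      · simp only [snd_add, snd_inl, snd_inr, zero_add]
        rw [hnorm2, ← hsdef]
        have hnum : (star (imQ q.fst) * imQ q.snd + star (imQ q.snd) * imQ q.fst).re
            = 2 * (s * c.imI) := by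
          rw [Quaternion.re_add, hA, hB]; ring
        have hnum2 : (star (⟨0, s, 0, 0⟩ : ℍ) * (⟨0, c.imI, 0, 0⟩ : ℍ)
            + star (⟨0, c.imI, 0, 0⟩ : ℍ) * (⟨0, s, 0, 0⟩ : ℍ)).re = 2 * (s * c.imI) := by
          erw [Quaternion.re_add, Quaternion.re_mul, Quaternion.re_mul, Quaternion.re_star, Quaternion.imI_star, Quaternion.imJ_star, Quaternion.imK_star]; simp
          ring
        rw [hnum]; erw [hnum2]
end
end

section
/- For dual elements q₁, q₂: |q₁ q₂| = |q₁| · |q₂|, where magnitudes are nonnegative dual numbers. -/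
open TrivSqZeroExt

noncomputable section
open Classical

local notation "ℍ" => Quaternion ℝ

lemma key_id (p q s t : ℍ) : (star (p*q) * (p*t + s*q) + star (p*t + s*q) * (p*q)).re =
    Quaternion.normSq p * (star q * t + star t * q).re
      + Quaternion.normSq q * (star p * s + star s * p).re := by
  simp [Quaternion.re_mul, Quaternion.normSq_def']
  ring

/-- For dual quaternions `q₁, q₂`: `|q₁ q₂| = |q₁| |q₂|` as dual numbers. -/
theorem dual_mag_mul (q₁ q₂ : DualNumber ℍ) :
    dmagH (q₁ * q₂) = dmagH q₁ * dmagH q₂ := by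
  by_cases h1 : q₁.fst = 0
  · by_cases h2 : q₂.fst = 0
    · simp [dmagH, h1, h2]
    · simp only [dmagH, h1, h2, fst_mul, snd_mul, ne_eq, not_true_eq_false, if_false,
        not_false_eq_true, if_true, zero_mul, smul_eq_mul, op_smul_eq_mul, mul_zero, zero_add]
      refine TrivSqZeroExt.ext ?_ ?_ <;>
        simp [norm_mul, mul_comm]
  · by_cases h2 : q₂.fst = 0
    · simp only [dmagH, h1, h2, fst_mul, snd_mul, ne_eq, not_true_eq_false, if_false,
        not_false_eq_true, if_true, mul_zero, smul_eq_mul, op_smul_eq_mul, zero_mul, add_zero]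
      refine TrivSqZeroExt.ext ?_ ?_ <;> simp [norm_mul, mul_comm]
    · have h12 : q₁.fst * q₂.fst ≠ 0 := mul_ne_zero h1 h2
      have hn1 : ‖q₁.fst‖ ≠ 0 := norm_ne_zero_iff.mpr h1
      have hn2 : ‖q₂.fst‖ ≠ 0 := norm_ne_zero_iff.mpr h2
      simp only [dmagH, h1, h2, h12, fst_mul, snd_mul, ne_eq, not_false_eq_true, if_true,
        smul_eq_mul, op_smul_eq_mul]
      refine TrivSqZeroExt.ext ?_ ?_
      · simp [norm_mul]
      · simp only [snd_add, snd_inl, snd_inr, zero_add, snd_mul, fst_add, fst_inl, fst_inr,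
          add_zero, smul_eq_mul, op_smul_eq_mul]
        rw [key_id]
        have e1 : Quaternion.normSq q₁.fst = ‖q₁.fst‖ * ‖q₁.fst‖ :=
          Quaternion.normSq_eq_norm_mul_self _
        have e2 : Quaternion.normSq q₂.fst = ‖q₂.fst‖ * ‖q₂.fst‖ :=
          Quaternion.normSq_eq_norm_mul_self _
        rw [e1, e2, norm_mul]
        field_simp
end
end

section
/- For dual elements q₁, q₂: |q₁ + q₂| ≤ |q₁| + |q₂| in the lexicographic order on dual numbers. -/
open TrivSqZeroExt

noncomputable section
open Classical

local notation "ℍ" => Quaternion ℝ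

/-- The lexicographic (total) order on dual numbers: `a ≤ b` iff `a_s < b_s`, or
`a_s = b_s` and `a_d ≤ b_d`. -/
def dle (a b : DualNumber ℝ) : Prop := a.fst < b.fst ∨ (a.fst = b.fst ∧ a.snd ≤ b.snd)

lemma quat_re_eq_inner (a c : ℍ) :
    (star a * c + star c * a).re = 2 * (inner ℝ a c : ℝ) := by
  have h1 : (star a * c).re = (c * star a).re := by
    simp [Quaternion.re_mul, mul_comm]
  have h2 : (star c * a).re = (a * star c).re := by
    simp [Quaternion.re_mul, mul_comm]
  simp [Quaternion.inner_def]
  ring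

lemma dmag_fst (p : DualNumber ℍ) : (dmagH p).fst = ‖p.fst‖ := by
  unfold dmagH
  split_ifs with h
  · simp
  · simp [not_ne_iff.mp h]

lemma dmag_snd_of_ne (p : DualNumber ℍ) (h : p.fst ≠ 0) :
    (dmagH p).snd = (inner ℝ p.fst p.snd : ℝ) / ‖p.fst‖ := by
  unfold dmagH
  rw [if_pos h]
  have hn : ‖p.fst‖ ≠ 0 := norm_ne_zero_iff.mpr h
  rw [snd_add, snd_inl, snd_inr, zero_add, quat_re_eq_inner]
  field_simp

lemma dmag_snd_of_eq (p : DualNumber ℍ) (h : p.fst = 0) :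
    (dmagH p).snd = ‖p.snd‖ := by
  unfold dmagH
  rw [if_neg (not_not.mpr h)]
  simp

/-- Triangle inequality for dual quaternions: `|q₁ + q₂| ≤ |q₁| + |q₂|` in the
lexicographic order on dual numbers. -/
theorem dual_mag_triangle (q₁ q₂ : DualNumber ℍ) :
    dle (dmagH (q₁ + q₂)) (dmagH q₁ + dmagH q₂) := by
  set a := q₁.fst with ha
  set b := q₂.fst with hb
  set a' := q₁.snd with ha'
  set b' := q₂.snd with hb'
  have hfstL : (dmagH (q₁ + q₂)).fst = ‖a + b‖ := by rw [dmag_fst]; simp [ha, hb]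
  have hfstR : (dmagH q₁ + dmagH q₂).fst = ‖a‖ + ‖b‖ := by
    simp [fst_add, dmag_fst, ha, hb]
  rcases lt_or_eq_of_le (norm_add_le a b) with hlt | heq
  · left; rw [hfstL, hfstR]; exact hlt
  · right
    refine ⟨by rw [hfstL, hfstR, heq], ?_⟩
    have hsndR : (dmagH q₁ + dmagH q₂).snd = (dmagH q₁).snd + (dmagH q₂).snd := by
      simp [snd_add]
    have habfst : (q₁ + q₂).fst = a + b := by simp [ha, hb]
    have habsnd : (q₁ + q₂).snd = a' + b' := by simp [ha', hb']
    rw [hsndR]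
    by_cases hab : a + b = 0
    · -- then ‖a‖ + ‖b‖ = 0, so a = 0 and b = 0
      have h0 : ‖a‖ + ‖b‖ = 0 := by rw [← heq, hab, norm_zero]
      have ha0 : a = 0 := by
        have := norm_nonneg a; have := norm_nonneg b
        have : ‖a‖ = 0 := by linarith
        exact norm_eq_zero.mp this
      have hb0 : b = 0 := by
        have := norm_nonneg a; have := norm_nonneg b
        have : ‖b‖ = 0 := by linarith
        exact norm_eq_zero.mp this
      rw [dmag_snd_of_eq _ (by rw [habfst]; exact hab),
          dmag_snd_of_eq q₁ (by rw [← ha]; exact ha0),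
          dmag_snd_of_eq q₂ (by rw [← hb]; exact hb0), habsnd]
      exact norm_add_le a' b'
    · rw [dmag_snd_of_ne _ (by rw [habfst]; exact hab), habfst, habsnd]
      by_cases ha0 : a = 0
      · have hb0 : b ≠ 0 := by rwa [ha0, zero_add] at hab
        rw [dmag_snd_of_eq q₁ (by rw [← ha]; exact ha0),
            dmag_snd_of_ne q₂ (by rw [← hb]; exact hb0)]
        rw [ha0, zero_add]
        have hbn : (0:ℝ) < ‖b‖ := norm_pos_iff.mpr hb0
        rw [inner_add_right, add_div]
        have hcs : (inner ℝ b a' : ℝ) ≤ ‖b‖ * ‖a'‖ := real_inner_le_norm b a'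
        have : (inner ℝ b a' : ℝ) / ‖b‖ ≤ ‖a'‖ := by
          rw [div_le_iff₀ hbn]; linarith [hcs]
        linarith
      · by_cases hb0 : b = 0
        · rw [dmag_snd_of_eq q₂ (by rw [← hb]; exact hb0),
              dmag_snd_of_ne q₁ (by rw [← ha]; exact ha0)]
          rw [hb0, add_zero]
          have han : (0:ℝ) < ‖a‖ := norm_pos_iff.mpr ha0
          rw [inner_add_right, add_div]
          have hcs : (inner ℝ a b' : ℝ) ≤ ‖a‖ * ‖b'‖ := real_inner_le_norm a b'
          have : (inner ℝ a b' : ℝ) / ‖a‖ ≤ ‖b'‖ := by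
            rw [div_le_iff₀ han]; linarith [hcs]
          linarith
        · -- both nonzero; same ray
          have hsr : SameRay ℝ a b := sameRay_iff_norm_add.mpr heq
          obtain ⟨r, hr, hrab⟩ := hsr.exists_nonneg_left ha0
          have hrpos : 0 < r := by
            rcases hr.lt_or_eq with h | h
            · exact h
            · exfalso; apply hb0; rw [← hrab, ← h, zero_smul]
          rw [dmag_snd_of_ne q₁ (by rw [← ha]; exact ha0),
              dmag_snd_of_ne q₂ (by rw [← hb]; exact hb0)]
          simp only [← ha, ← hb, ← ha', ← hb']
          have han : (0:ℝ) < ‖a‖ := norm_pos_iff.mpr ha0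
          have hab' : a + b = (1 + r) • a := by
            rw [add_smul, one_smul, hrab]
          have h1r : (0:ℝ) < 1 + r := by linarith
          rw [hab', ← hrab]
          rw [norm_smul, norm_smul, inner_smul_left, inner_smul_left]
          simp only [RCLike.star_def, conj_trivial, Real.norm_eq_abs,
            abs_of_pos h1r, abs_of_pos hrpos]
          rw [inner_add_right]
          apply le_of_eq
          field_simp
end
end

section
/- For a unit dual complex number a = e^{iθ} and a positive integer n, the n-th roots of a are exactly the dual complex numbers z = e^{i(θ + 2πj)/n} for j = 0, 1, …, n−1; i.e., z^n = a if and only if z is of this form. -/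
open TrivSqZeroExt

noncomputable section

/-- The dual exponential `e^{iθ}` of a dual angle `θ = θ_s + θ_d ε`:
`e^{iθ} = e^{iθ_s} + i θ_d e^{iθ_s} ε`. -/
def dcexp (θ : DualNumber ℝ) : DualNumber ℂ :=
  inl (Complex.exp (Complex.I * (θ.fst : ℂ))) +
    inr (Complex.I * (θ.snd : ℂ) * Complex.exp (Complex.I * (θ.fst : ℂ)))

private lemma cexp_pow_helper (n : ℕ) (hn : 0 < n) (c w : ℂ) :
    w ^ n = Complex.exp c ↔
      ∃ j : ℕ, j < n ∧ w = Complex.exp ((c + 2 * Real.pi * Complex.I * j) / n) := by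
  have hn0 : (n : ℂ) ≠ 0 := Nat.cast_ne_zero.mpr hn.ne'
  constructor
  · intro h
    have hv : Complex.exp (c / n) ^ n = Complex.exp c := by
      rw [← Complex.exp_nat_mul]; congr 1; field_simp
    have hu : (w / Complex.exp (c / n)) ^ n = 1 := by
      rw [div_pow, h, hv, div_self (Complex.exp_ne_zero c)]
    haveI : NeZero n := ⟨hn.ne'⟩
    obtain ⟨j, hj, hjeq⟩ :=
      (Complex.isPrimitiveRoot_exp n hn.ne').eq_pow_of_pow_eq_one hu
    refine ⟨j, hj, ?_⟩
    rw [← Complex.exp_nat_mul] at hjeq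
    have hw : w = Complex.exp (c / n) * Complex.exp ((j : ℂ) * (2 * Real.pi * Complex.I / n)) := by
      rw [hjeq]
      field_simp
    rw [hw, ← Complex.exp_add]
    congr 1
    field_simp
  · rintro ⟨j, hj, rfl⟩
    rw [← Complex.exp_nat_mul]
    have : (n : ℂ) * ((c + 2 * Real.pi * Complex.I * j) / n) = c + (j : ℂ) * (2 * Real.pi * Complex.I) := by
      field_simp
    rw [this, Complex.exp_add, Complex.exp_nat_mul, Complex.exp_two_pi_mul_I, one_pow, mul_one]

/-- For a unit dual complex number `a = e^{iθ}` and a positive integer `n`, the `n`-th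
roots of `a` are exactly `z = e^{i(θ + 2πj)/n}` for `j = 0, 1, …, n-1`. -/
theorem dual_complex_nth_roots (n : ℕ) (hn : 0 < n) (θ : DualNumber ℝ)
    (z : DualNumber ℂ) :
    z ^ n = dcexp θ ↔
      ∃ j : ℕ, j < n ∧
        z = dcexp (inl ((θ.fst + 2 * Real.pi * j) / n) + inr (θ.snd / n)) := by
  have hn0 : (n : ℂ) ≠ 0 := Nat.cast_ne_zero.mpr hn.ne'
  constructor
  · intro h
    have h1 : z.fst ^ n = Complex.exp (Complex.I * θ.fst) := by
      have := congrArg fst h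
      simpa [dcexp] using this
    have h2 : (n : ℂ) * (z.fst ^ (n - 1) * z.snd)
        = Complex.I * θ.snd * Complex.exp (Complex.I * θ.fst) := by
      have := congrArg snd h
      simpa [dcexp, snd_pow, smul_eq_mul, Nat.pred_eq_sub_one] using this
    obtain ⟨j, hj, hw⟩ := (cexp_pow_helper n hn _ _).mp h1
    refine ⟨j, hj, ?_⟩
    have hfst_eq : z.fst = Complex.exp (Complex.I * (((θ.fst + 2 * Real.pi * j) / n : ℝ) : ℂ)) := by
      rw [hw]; congr 1; push_cast; field_simp
    have hwne : z.fst ≠ 0 := by rw [hfst_eq]; exact Complex.exp_ne_zero _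
    have hpow : z.fst ^ (n - 1) * z.fst = z.fst ^ n := by
      rw [← pow_succ]; congr 1; omega
    have key : (n : ℂ) * (z.fst ^ (n - 1) * z.snd)
        = (n : ℂ) * (z.fst ^ (n - 1) * (Complex.I * ((θ.snd / n : ℝ) : ℂ) * z.fst)) := by
      rw [h2, ← h1, ← hpow]
      push_cast
      field_simp
    have hsnd : z.snd = Complex.I * ((θ.snd / n : ℝ) : ℂ) * z.fst :=
      mul_left_cancel₀ (pow_ne_zero _ hwne)
        (mul_left_cancel₀ hn0 key)
    apply TrivSqZeroExt.ext
    · simpa [dcexp] using hfst_eq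
    · simp [dcexp, hsnd, hfst_eq]
  · rintro ⟨j, hj, rfl⟩
    have hfst : Complex.exp (Complex.I * (((θ.fst + 2 * Real.pi * j) / n : ℝ) : ℂ)) ^ n
        = Complex.exp (Complex.I * θ.fst) := by
      apply (cexp_pow_helper n hn _ _).mpr
      refine ⟨j, hj, ?_⟩
      congr 1
      push_cast
      field_simp
    apply TrivSqZeroExt.ext
    · simpa [dcexp] using hfst
    · have hpow : Complex.exp (Complex.I * (((θ.fst + 2 * Real.pi * j) / n : ℝ) : ℂ)) ^ (n - 1)
          * Complex.exp (Complex.I * (((θ.fst + 2 * Real.pi * j) / n : ℝ) : ℂ))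
          = Complex.exp (Complex.I * θ.fst) := by
        rw [← pow_succ]
        rw [show n - 1 + 1 = n from by omega]
        exact hfst
      simp only [dcexp, snd_pow, smul_eq_mul, Nat.pred_eq_sub_one, snd_add, snd_inl, snd_inr,
        fst_add, fst_inl, fst_inr, add_zero, zero_add, nsmul_eq_mul,
        Complex.ofReal_div, Complex.ofReal_natCast]
      rw [← hpow]
      simp only [Complex.ofReal_div, Complex.ofReal_natCast]
      field_simp
end
end
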